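/- arXiv:2511.04794 — 2 statements merged into one kernel-verified Lean document; each statement's English description precedes it below -/
import Mathlib

section
/- Closeness lemma for decision trees: let X ⊆ {0,1}^n be a subcube with free coordinate set F, |F| ≥ 0.1n, and let X' ⊆ X be a subcube with free coordinates F' ⊆ F such that |F∖F'| ≤ δ√n. Let σ be the distribution obtained by sampling u uniformly from X, a uniformly random subset I of F of size √n, and setting coordinates in I to 1. Then Pr_{x∼σ}[x ∈ X'] ≥ (1 - 10δ)·Pr_{u∼X}[u ∈ X']. -/
open Classical

lemma natA (f' s : ℕ) : ∀ f, f' ≤ f →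
    Nat.choose f s ≤ Nat.choose f' s + (f - f') * Nat.choose (f-1) (s-1) := by
  intro f
  induction f with
  | zero => intro h; interval_cases f'; simp
  | succ f ih =>
    intro h
    rcases Nat.eq_or_lt_of_le h with h' | h'
    · subst h'; simp
    · have hf : f' ≤ f := Nat.lt_succ_iff.mp h'
      rcases s with _ | k
      · simp [Nat.choose_zero_right]
      · have IH : Nat.choose f (k+1) ≤ Nat.choose f' (k+1) + (f - f') * Nat.choose (f-1) k := by
          simpa using ih hf
        have hsucc : Nat.choose (f+1) (k+1) = Nat.choose f k + Nat.choose f (k+1) :=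
          Nat.choose_succ_succ f k
        have hmono : (f - f') * Nat.choose (f-1) k ≤ (f - f') * Nat.choose f k :=
          Nat.mul_le_mul_left _ (Nat.choose_le_choose k (Nat.sub_le f 1))
        have hd : f + 1 - f' = (f - f') + 1 := by omega
        rw [hsucc, hd]
        simp only [Nat.add_sub_cancel, Nat.add_mul, Nat.one_mul]
        linarith [IH, hmono]

lemma natB (f s : ℕ) (hs : 1 ≤ s) (hsf : s ≤ f) :
    f * Nat.choose (f-1) (s-1) = s * Nat.choose f s := by
  obtain ⟨f₀, rfl⟩ : ∃ f₀, f = f₀ + 1 := ⟨f - 1, by omega⟩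
  obtain ⟨s₀, rfl⟩ : ∃ s₀, s = s₀ + 1 := ⟨s - 1, by omega⟩
  simp only [Nat.add_sub_cancel]
  rw [show (f₀+1) = Nat.succ f₀ from rfl, Nat.add_one_mul_choose_eq, mul_comm]

lemma keyReal (n s f f' : ℕ) (hs : s * s = n) (δ : ℝ) (hδ : 0 ≤ δ)
    (hf' : f' ≤ f) (hsf : s ≤ f) (hF : (n : ℝ) ≤ 10 * f)
    (hd : ((f - f' : ℕ) : ℝ) ≤ δ * s) :
    (1 - 10 * δ) * (Nat.choose f s : ℝ) ≤ (Nat.choose f' s : ℝ) := by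
  rcases Nat.eq_zero_or_pos s with rfl | hs1
  · simp only [Nat.choose_zero_right, Nat.cast_one]
    nlinarith
  · have hA : (Nat.choose f s : ℝ) ≤ Nat.choose f' s + ((f - f' : ℕ) : ℝ) * Nat.choose (f-1) (s-1) := by
      have := natA f' s f hf'
      exact_mod_cast this
    have hB : (f : ℝ) * Nat.choose (f-1) (s-1) = s * Nat.choose f s := by
      exact_mod_cast natB f s hs1 hsf
    have hfpos : (0:ℝ) < f := by
      have : 0 < f := lt_of_lt_of_le hs1 hsf
      exact_mod_cast this
    have hCnn : (0:ℝ) ≤ Nat.choose f s := by positivity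
    have hC1nn : (0:ℝ) ≤ Nat.choose (f-1) (s-1) := by positivity
    -- d * C1 ≤ 10δ C
    have hkey : ((f - f' : ℕ) : ℝ) * Nat.choose (f-1) (s-1) ≤ 10 * δ * Nat.choose f s := by
      rw [← mul_le_mul_iff_of_pos_right hfpos]
      have hsn : ((s:ℝ) * s) = n := by exact_mod_cast hs
      have hsC : (0:ℝ) ≤ (s:ℝ) * Nat.choose f s := by positivity
      have e1 : ((f - f' : ℕ) : ℝ) * Nat.choose (f-1) (s-1) * f
          = ((f - f' : ℕ) : ℝ) * ((s:ℝ) * Nat.choose f s) := by rw [← hB]; ring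
      have h1 : ((f - f' : ℕ) : ℝ) * ((s:ℝ) * Nat.choose f s)
          ≤ δ * s * ((s:ℝ) * Nat.choose f s) := mul_le_mul_of_nonneg_right hd hsC
      have e2 : δ * s * ((s:ℝ) * Nat.choose f s) = δ * (n:ℝ) * Nat.choose f s := by
        rw [← hsn]; ring
      have h3 : δ * (n:ℝ) * Nat.choose f s ≤ δ * (10 * (f:ℝ)) * Nat.choose f s := by
        have := mul_le_mul_of_nonneg_right (mul_le_mul_of_nonneg_left hF hδ) hCnn
        linarith
      linarith [e1, h1, e2, h3]
    nlinarith

/-- Closeness lemma for decision trees. `X` is the subcube of `{0,1}^n` with free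
coordinates `F` (coordinates outside `F` fixed to `z`), `X' ⊆ X` a subcube with free
coordinates `F' ⊆ F` (coordinates outside `F'` fixed to `z'`), `|F| ≥ 0.1n` and
`|F ∖ F'| ≤ δ√n`, where `s = √n`. The sprinkled-1s distribution `σ` samples `u`
uniform in `X` and a uniformly random `s`-subset `I` of `F` and sets coordinates in
`I` to `1`. Then `Pr_{x∼σ}[x ∈ X'] ≥ (1 - 10δ)·Pr_{u∼X}[u ∈ X']`. -/
theorem stmt10 (n s : ℕ) (hs : s * s = n) (δ : ℝ) (hδ : 0 ≤ δ)
    (F F' : Finset (Fin n)) (hFF : F' ⊆ F) (hsF : s ≤ F.card)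
    (hF : (n : ℝ) ≤ 10 * F.card)
    (z z' : Fin n → Bool)
    (hdiff : ((F \ F').card : ℝ) ≤ δ * s) :
    let X : Finset (Fin n → Bool) :=
      Finset.univ.filter (fun x => ∀ i ∉ F, x i = z i)
    let X' : Finset (Fin n → Bool) :=
      Finset.univ.filter (fun x => ∀ i ∉ F', x i = z' i)
    X' ⊆ X →
    (1 - 10 * δ) * ((X'.card : ℝ) / (X.card : ℝ)) ≤
      (∑ u ∈ X, ∑ I ∈ F.powersetCard s,
          (if (fun i => if i ∈ I then true else u i) ∈ X' then (1 : ℝ) else 0)) /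
        ((X.card : ℝ) * ((F.powersetCard s).card : ℝ)) := by
  intro X X' hsub
  have hX'mem : ∀ x : Fin n → Bool, x ∈ X' ↔ ∀ i ∉ F', x i = z' i := by
    intro x; simp [X']
  -- cardinalities
  have hPcard : (F.powersetCard s).card = F.card.choose s := Finset.card_powersetCard s F
  have hP'card : (F'.powersetCard s).card = F'.card.choose s := Finset.card_powersetCard s F'
  have hXpos : 0 < X.card := by
    refine Finset.card_pos.mpr ⟨z, ?_⟩
    simp [X]
  have hPpos : 0 < (F.powersetCard s).card := by
    rw [hPcard]; exact Nat.choose_pos hsF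
  have hXposR : (0:ℝ) < X.card := by exact_mod_cast hXpos
  have hPposR : (0:ℝ) < (F.powersetCard s).card := by exact_mod_cast hPpos
  -- inner sum bound for u ∈ X'
  have hinner : ∀ u ∈ X', ((F'.powersetCard s).card : ℝ) ≤
      ∑ I ∈ F.powersetCard s,
        (if (fun i => if i ∈ I then true else u i) ∈ X' then (1 : ℝ) else 0) := by
    intro u hu
    have hsubP : F'.powersetCard s ⊆ F.powersetCard s := Finset.powersetCard_mono hFF
    have h1 : ∀ I ∈ F'.powersetCard s,
        (if (fun i => if i ∈ I then true else u i) ∈ X' then (1 : ℝ) else 0) = 1 := by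
      intro I hI
      rw [Finset.mem_powersetCard] at hI
      have : (fun i => if i ∈ I then true else u i) ∈ X' := by
        rw [hX'mem]
        intro i hi
        have hiI : i ∉ I := fun h => hi (hI.1 h)
        simp only [hiI, if_false]
        exact (hX'mem u).mp hu i hi
      simp only [this, if_true]
    calc ((F'.powersetCard s).card : ℝ)
        = ∑ I ∈ F'.powersetCard s,
            (if (fun i => if i ∈ I then true else u i) ∈ X' then (1 : ℝ) else 0) := by
          rw [Finset.sum_congr rfl h1]; simp
      _ ≤ _ := by
          apply Finset.sum_le_sum_of_subset_of_nonneg hsubP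
          intro I _ _; positivity
  -- numerator bound
  have hN : (X'.card : ℝ) * ((F'.powersetCard s).card : ℝ) ≤
      ∑ u ∈ X, ∑ I ∈ F.powersetCard s,
        (if (fun i => if i ∈ I then true else u i) ∈ X' then (1 : ℝ) else 0) := by
    calc (X'.card : ℝ) * ((F'.powersetCard s).card : ℝ)
        = ∑ _u ∈ X', ((F'.powersetCard s).card : ℝ) := by
          rw [Finset.sum_const, nsmul_eq_mul]
      _ ≤ ∑ u ∈ X', ∑ I ∈ F.powersetCard s,
            (if (fun i => if i ∈ I then true else u i) ∈ X' then (1 : ℝ) else 0) :=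
          Finset.sum_le_sum hinner
      _ ≤ _ := by
          apply Finset.sum_le_sum_of_subset_of_nonneg hsub
          intro u _ _
          apply Finset.sum_nonneg
          intro I _; positivity
  -- choose inequality
  have hkey : (1 - 10 * δ) * ((F.powersetCard s).card : ℝ) ≤ ((F'.powersetCard s).card : ℝ) := by
    rw [hPcard, hP'card]
    apply keyReal n s F.card F'.card hs δ hδ (Finset.card_le_card hFF) hsF hF
    rw [← Finset.card_sdiff_of_subset hFF]; exact hdiff
  -- conclude
  rw [le_div_iff₀ (by positivity)]
  have hX'nn : (0:ℝ) ≤ X'.card := by positivity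
  calc (1 - 10 * δ) * ((X'.card : ℝ) / (X.card : ℝ)) * ((X.card : ℝ) * ((F.powersetCard s).card : ℝ))
      = (X'.card : ℝ) * ((1 - 10 * δ) * ((F.powersetCard s).card : ℝ)) := by
        field_simp
    _ ≤ (X'.card : ℝ) * ((F'.powersetCard s).card : ℝ) :=
        mul_le_mul_of_nonneg_left hkey hX'nn
    _ ≤ _ := hN
end

section
/- Deficit growth under a communication protocol: let X × Y ⊆ Σ^n × Σ^n be a rectangle, F ⊆ [n], and Π a deterministic protocol of communication cost d whose leaves partition X × Y into subrectangles. For (x,y) uniform in X × Y, with probability at least 1 - 2ε the leaf rectangle L containing (x,y) satisfies D(L,F) ≤ D(X×Y,F) + 2d + 2·log(1/ε), where D(A×B,F) := 2|F|m - H_∞(a_F) - H_∞(b_F) for (a,b) uniform in A×B. -/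
open Classical

/-- Largest number of elements of `A` agreeing with a single assignment on `F`. -/
noncomputable def projMaxCard (n m : ℕ) (A : Finset (Fin n → Fin m → Bool))
    (F : Finset (Fin n)) : ℕ :=
  Finset.univ.sup (fun z : Fin n → Fin m → Bool =>
    (A.filter (fun a => ∀ i ∈ F, a i = z i)).card)

/-- Min-entropy of the projection to `F` of the uniform distribution on `A`. -/
noncomputable def minEntU (n m : ℕ) (A : Finset (Fin n → Fin m → Bool))
    (F : Finset (Fin n)) : ℝ :=
  - Real.logb 2 ((projMaxCard n m A F : ℝ) / (A.card : ℝ))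

/-- Deficit of the rectangle `A × B` with respect to `F`:
`D(A×B,F) = 2|F|m - H_∞(a_F) - H_∞(b_F)` for `(a,b) ∼ unif(A×B)`. -/
noncomputable def deficitRect (n m : ℕ) (A B : Finset (Fin n → Fin m → Bool))
    (F : Finset (Fin n)) : ℝ :=
  2 * (F.card : ℝ) * m - minEntU n m A F - minEntU n m B F

lemma projMaxCard_mono {n m : ℕ} {A B : Finset (Fin n → Fin m → Bool)} (h : A ⊆ B)
    (F : Finset (Fin n)) : projMaxCard n m A F ≤ projMaxCard n m B F :=
  Finset.sup_mono_fun fun z _ =>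
    Finset.card_le_card (Finset.filter_subset_filter _ h)

lemma one_le_projMaxCard {n m : ℕ} {A : Finset (Fin n → Fin m → Bool)} (h : A.Nonempty)
    (F : Finset (Fin n)) : 1 ≤ projMaxCard n m A F := by
  obtain ⟨a, ha⟩ := h
  have hmem : a ∈ A.filter (fun x => ∀ i ∈ F, x i = a i) :=
    Finset.mem_filter.mpr ⟨ha, fun i _ => rfl⟩
  calc 1 ≤ (A.filter (fun x => ∀ i ∈ F, x i = a i)).card :=
        Finset.card_pos.mpr ⟨a, hmem⟩
    _ ≤ projMaxCard n m A F :=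
        Finset.le_sup (f := fun z : Fin n → Fin m → Bool =>
          (A.filter (fun x => ∀ i ∈ F, x i = z i)).card) (Finset.mem_univ a)

lemma entDiff {n m d : ℕ} {ε : ℝ} (hε : 0 < ε)
    {X A : Finset (Fin n → Fin m → Bool)} (F : Finset (Fin n))
    (hA : A ⊆ X) (hXne : X.Nonempty)
    (hAc : ε * X.card / 2 ^ d ≤ (A.card : ℝ)) :
    minEntU n m X F - minEntU n m A F ≤ d + Real.logb 2 (1 / ε) := by
  have hX1 : (1 : ℝ) ≤ X.card := by exact_mod_cast hXne.card_pos
  have hAc0 : (0 : ℝ) < A.card := lt_of_lt_of_le (by positivity) hAc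
  have hAne : A.Nonempty := Finset.card_pos.mp (by exact_mod_cast hAc0)
  have hpA1 : (1 : ℝ) ≤ projMaxCard n m A F := by
    exact_mod_cast one_le_projMaxCard hAne F
  have hpAX : (projMaxCard n m A F : ℝ) ≤ projMaxCard n m X F := by
    exact_mod_cast projMaxCard_mono hA F
  set pA := (projMaxCard n m A F : ℝ) with hpA
  set pX := (projMaxCard n m X F : ℝ) with hpX
  set cA := (A.card : ℝ) with hcA
  set cX := (X.card : ℝ) with hcX
  have hpX1 : (1 : ℝ) ≤ pX := le_trans hpA1 hpAX
  have hεX : ε * cX ≤ cA * 2 ^ d := by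
    rw [div_le_iff₀ (by positivity : (0:ℝ) < 2 ^ d)] at hAc
    linarith
  have key : pA / cA ≤ pX / cX * 2 ^ d * (1 / ε) := by
    rw [div_le_iff₀ hAc0]
    have h2 : pX / cX * 2 ^ d * (1 / ε) * cA = pX * (cA * 2 ^ d) / (ε * cX) := by
      field_simp
    rw [h2, le_div_iff₀ (by positivity)]
    nlinarith [mul_le_mul hpAX hεX (by positivity) (by linarith)]
  have hlog : Real.logb 2 (pA / cA) ≤ Real.logb 2 (pX / cX * 2 ^ d * (1 / ε)) := by
    rw [Real.logb_le_logb one_lt_two (by positivity) (by positivity)]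
    exact key
  have hsplit : Real.logb 2 (pX / cX * 2 ^ d * (1 / ε)) =
      Real.logb 2 (pX / cX) + d + Real.logb 2 (1 / ε) := by
    rw [Real.logb_mul (by positivity) (by positivity),
        Real.logb_mul (by positivity) (by positivity), Real.logb_pow,
        Real.logb_self_eq_one one_lt_two]
    ring
  simp only [minEntU, ← hpA, ← hpX, ← hcA, ← hcX]
  rw [hsplit] at hlog
  linarith

lemma deficit_key {n m d : ℕ} {ε : ℝ} (hε : 0 < ε)
    {X Y A B : Finset (Fin n → Fin m → Bool)} (F : Finset (Fin n))
    (hA : A ⊆ X) (hB : B ⊆ Y) (hXne : X.Nonempty) (hYne : Y.Nonempty)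
    (hAc : ε * X.card / 2 ^ d ≤ (A.card : ℝ))
    (hBc : ε * Y.card / 2 ^ d ≤ (B.card : ℝ)) :
    deficitRect n m A B F ≤ deficitRect n m X Y F + 2 * d + 2 * Real.logb 2 (1 / ε) := by
  have h1 := entDiff (d := d) hε F hA hXne hAc
  have h2 := entDiff (d := d) hε F hB hYne hBc
  unfold deficitRect
  linarith

/-- Deficit growth under a deterministic communication protocol of cost `d`: the
leaves, indexed by transcripts in `{0,1}^d`, are rectangles `A t × B t` partitioning
`X × Y`. For `(x,y)` uniform in `X × Y`, with probability at least `1 - 2ε` the leaf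
rectangle containing `(x,y)` satisfies
`D(L,F) ≤ D(X×Y,F) + 2d + 2·log₂(1/ε)`. -/
theorem stmt14 (n m d : ℕ) (ε : ℝ) (hε : 0 < ε)
    (X Y : Finset (Fin n → Fin m → Bool)) (hX : X.Nonempty) (hY : Y.Nonempty)
    (F : Finset (Fin n))
    (A B : (Fin d → Bool) → Finset (Fin n → Fin m → Bool))
    (hAX : ∀ t, A t ⊆ X) (hBY : ∀ t, B t ⊆ Y)
    (hpart : ∀ p ∈ X ×ˢ Y, ∃! t, p.1 ∈ A t ∧ p.2 ∈ B t) :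
    1 - 2 * ε ≤
      (((X ×ˢ Y).filter (fun p => ∀ t, p.1 ∈ A t → p.2 ∈ B t →
          deficitRect n m (A t) (B t) F ≤
            deficitRect n m X Y F + 2 * d + 2 * Real.logb 2 (1 / ε))).card : ℝ) /
        (((X ×ˢ Y).card : ℝ)) := by
  classical
  set P : (Fin n → Fin m → Bool) × (Fin n → Fin m → Bool) → Prop :=
    fun p => ∀ t, p.1 ∈ A t → p.2 ∈ B t →
      deficitRect n m (A t) (B t) F ≤
        deficitRect n m X Y F + 2 * d + 2 * Real.logb 2 (1 / ε) with hP
  set N := X ×ˢ Y with hNdef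
  have hNcard : (N.card : ℝ) = (X.card : ℝ) * (Y.card : ℝ) := by
    rw [hNdef, Finset.card_product]; push_cast; ring
  have hX1 : (1 : ℝ) ≤ X.card := by exact_mod_cast hX.card_pos
  have hY1 : (1 : ℝ) ≤ Y.card := by exact_mod_cast hY.card_pos
  have hNpos : (0 : ℝ) < N.card := by rw [hNcard]; positivity
  -- bad transcripts
  set badT : Finset (Fin d → Bool) := Finset.univ.filter
    (fun t => ¬ (ε * X.card / 2 ^ d ≤ ((A t).card : ℝ) ∧
                 ε * Y.card / 2 ^ d ≤ ((B t).card : ℝ))) with hbadT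
  -- bad points are covered by bad leaves
  have hcover : N.filter (fun p => ¬ P p) ⊆ badT.biUnion (fun t => A t ×ˢ B t) := by
    intro p hp
    rw [Finset.mem_filter] at hp
    obtain ⟨hpN, hnp⟩ := hp
    simp only [hP] at hnp
    push_neg at hnp
    obtain ⟨t, hta, htb, hbad⟩ := hnp
    refine Finset.mem_biUnion.mpr ⟨t, ?_, Finset.mem_product.mpr ⟨hta, htb⟩⟩
    rw [hbadT, Finset.mem_filter]
    refine ⟨Finset.mem_univ _, fun hsz => ?_⟩
    exact absurd (deficit_key hε F (hAX t) (hBY t) hX hY hsz.1 hsz.2) (not_le.mpr hbad)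
  -- size of bad leaves
  have hleaf : ∀ t ∈ badT, ((A t ×ˢ B t).card : ℝ) ≤ ε * X.card * Y.card / 2 ^ d := by
    intro t ht
    rw [hbadT, Finset.mem_filter] at ht
    have hcard : ((A t ×ˢ B t).card : ℝ) = ((A t).card : ℝ) * ((B t).card : ℝ) := by
      rw [Finset.card_product]; push_cast; ring
    have hAle : ((A t).card : ℝ) ≤ X.card := by
      exact_mod_cast Finset.card_le_card (hAX t)
    have hBle : ((B t).card : ℝ) ≤ Y.card := by
      exact_mod_cast Finset.card_le_card (hBY t)
    have hA0 : (0 : ℝ) ≤ (A t).card := by positivity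
    have hB0 : (0 : ℝ) ≤ (B t).card := by positivity
    rcases not_and_or.mp ht.2 with h | h
    · push_neg at h
      rw [hcard]
      calc ((A t).card : ℝ) * ((B t).card : ℝ) ≤ (ε * X.card / 2 ^ d) * Y.card := by
            apply mul_le_mul (le_of_lt h) hBle hB0 (by positivity)
        _ = ε * X.card * Y.card / 2 ^ d := by ring
    · push_neg at h
      rw [hcard]
      calc ((A t).card : ℝ) * ((B t).card : ℝ) ≤ X.card * (ε * Y.card / 2 ^ d) := by
            apply mul_le_mul hAle (le_of_lt h) hB0 (by positivity)
        _ = ε * X.card * Y.card / 2 ^ d := by ring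
  have hbadTcard : (badT.card : ℝ) ≤ 2 ^ d := by
    have : badT.card ≤ Fintype.card (Fin d → Bool) := Finset.card_le_univ _
    have h2 : Fintype.card (Fin d → Bool) = 2 ^ d := by simp
    rw [h2] at this
    exact_mod_cast this
  -- bound on bad mass
  have hbadmass : ((N.filter (fun p => ¬ P p)).card : ℝ) ≤ ε * X.card * Y.card := by
    calc ((N.filter (fun p => ¬ P p)).card : ℝ)
        ≤ ((badT.biUnion (fun t => A t ×ˢ B t)).card : ℝ) := by
          exact_mod_cast Finset.card_le_card hcover
      _ ≤ ∑ t ∈ badT, ((A t ×ˢ B t).card : ℝ) := by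
          exact_mod_cast Finset.card_biUnion_le
      _ ≤ ∑ _t ∈ badT, (ε * X.card * Y.card / 2 ^ d) := Finset.sum_le_sum hleaf
      _ = badT.card * (ε * X.card * Y.card / 2 ^ d) := by
          rw [Finset.sum_const, nsmul_eq_mul]
      _ ≤ 2 ^ d * (ε * X.card * Y.card / 2 ^ d) := by
          apply mul_le_mul_of_nonneg_right hbadTcard (by positivity)
      _ = ε * X.card * Y.card := by field_simp
  have hsplitcard : (N.filter P).card + (N.filter (fun p => ¬ P p)).card = N.card :=
    Finset.card_filter_add_card_filter_not P
  have hGood : ((N.filter P).card : ℝ) ≥ (X.card : ℝ) * Y.card - ε * X.card * Y.card := by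
    have : ((N.filter P).card : ℝ) + ((N.filter (fun p => ¬ P p)).card : ℝ) = N.card := by
      exact_mod_cast hsplitcard
    rw [hNcard] at this
    linarith
  rw [le_div_iff₀ hNpos, hNcard]
  have hεN : 0 < ε * ((X.card : ℝ) * Y.card) := by positivity
  nlinarith [hGood, hεN]
end
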